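/- Let (Ǎ_i, B̌_i, M̌_i)_{i≥1} be an i.i.d. sequence of random vectors with Ǎ_i > 0, independent of (Ǎ_0, B̌_0, M̌_0), and let W = sup_{i≥0} V_i with V_i as in the recursion V_0 = M̌_0, V_i = B̌_0 + Ǎ_0 B̌_1 + ⋯ + (Ǎ_0 ⋯ Ǎ_{i-1}) M̌_i. Then W equals in distribution B̌_0 + max{M̌_0 - B̌_0, Ǎ_0 W^ℜ}, where W^ℜ is an independent copy of sup_{i≥0} V_i^{(1)} built from the shifted sequence, and W^ℜ equals in distribution B̌ + max{M̌ - B̌, Ǎ W^ℜ} with (Ǎ, B̌, M̌) distributed as (Ǎ_1, B̌_1, M̌_1) and independent of W^ℜ. -/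

import Mathlib

open MeasureTheory ProbabilityTheory

noncomputable def perpCycleSup (A B M : ℕ → ℝ) : EReal :=
  ⨆ i : ℕ, ((∑ j ∈ Finset.range i, (∏ k ∈ Finset.range j, A k) * B j +
      (∏ k ∈ Finset.range i, A k) * M i : ℝ) : EReal)

lemma perp_term_succ (A B M : ℕ → ℝ) (i : ℕ) :
    (∑ j ∈ Finset.range (i+1), (∏ k ∈ Finset.range j, A k) * B j +
      (∏ k ∈ Finset.range (i+1), A k) * M (i+1)) =
    B 0 + A 0 * (∑ j ∈ Finset.range i, (∏ k ∈ Finset.range j, A (k+1)) * B (j+1) +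
      (∏ k ∈ Finset.range i, A (k+1)) * M (i+1)) := by
  rw [Finset.sum_range_succ' (fun j => (∏ k ∈ Finset.range j, A k) * B j) i]
  simp only [Finset.prod_range_succ' A, Finset.prod_range_zero, one_mul]
  have h1 : ∑ j ∈ Finset.range i, ((∏ k ∈ Finset.range j, A (k+1)) * A 0) * B (j+1)
      = ∑ j ∈ Finset.range i, A 0 * ((∏ k ∈ Finset.range j, A (k+1)) * B (j+1)) :=
    Finset.sum_congr rfl (fun j _ => by ring)
  rw [h1, ← Finset.mul_sum]
  ring

lemma ereal_iSup_nat_split (f : ℕ → EReal) : ⨆ i, f i = max (f 0) (⨆ i, f (i+1)) := by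
  apply le_antisymm
  · refine iSup_le fun i => ?_
    cases i with
    | zero => exact le_max_left _ _
    | succ n => exact le_max_of_le_right (le_iSup (fun i => f (i+1)) n)
  · exact max_le (le_iSup f 0) (iSup_le fun i => le_iSup f (i+1))

lemma ereal_add_coe_iSup (b : ℝ) (f : ℕ → EReal) :
    (b : EReal) + ⨆ i, f i = ⨆ i, ((b : EReal) + f i) := by
  have gc : GaloisConnection (fun x : EReal => (b : EReal) + x)
      (fun y : EReal => y - (b : EReal)) := by
    intro x y
    simp only []
    rw [add_comm]
    exact (EReal.le_sub_iff_add_le (Or.inl (EReal.coe_ne_bot b))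
      (Or.inl (EReal.coe_ne_top b))).symm
  exact gc.l_iSup

lemma ereal_mul_coe_iSup {a : ℝ} (ha : 0 < a) (f : ℕ → EReal) :
    (a : EReal) * ⨆ i, f i = ⨆ i, ((a : EReal) * f i) := by
  have key : ∀ x : EReal, ((a⁻¹ : ℝ) : EReal) * ((a : EReal) * x) = x := fun x => by
    rw [← mul_assoc, ← EReal.coe_mul, inv_mul_cancel₀ ha.ne', EReal.coe_one, one_mul]
  have key' : ∀ x : EReal, (a : EReal) * (((a⁻¹ : ℝ) : EReal) * x) = x := fun x => by
    rw [← mul_assoc, ← EReal.coe_mul, mul_inv_cancel₀ ha.ne', EReal.coe_one, one_mul]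
  have gc : GaloisConnection (fun x : EReal => (a : EReal) * x)
      (fun y : EReal => ((a⁻¹ : ℝ) : EReal) * y) := by
    intro x y
    constructor
    · intro h
      have := mul_le_mul_of_nonneg_left h
        (by exact_mod_cast inv_nonneg.2 ha.le : (0:EReal) ≤ ((a⁻¹ : ℝ) : EReal))
      rwa [key] at this
    · intro h
      have := mul_le_mul_of_nonneg_left h (by exact_mod_cast ha.le : (0:EReal) ≤ (a : EReal))
      rwa [key'] at this
  exact gc.l_iSup

lemma ereal_add_coe_max (b : ℝ) (x y : EReal) :
    (b : EReal) + max x y = max ((b : EReal) + x) ((b : EReal) + y) :=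
  Monotone.map_max (fun _ _ h => by gcongr)

lemma perpCycleSup_rec (A B M : ℕ → ℝ) (hA : 0 < A 0) :
    perpCycleSup A B M = (B 0 : EReal) + max ((M 0 - B 0 : ℝ) : EReal)
      ((A 0 : EReal) * perpCycleSup (fun i => A (i+1)) (fun i => B (i+1)) (fun i => M (i+1))) := by
  rw [perpCycleSup, ereal_iSup_nat_split]
  have h0 : ((∑ j ∈ Finset.range 0, (∏ k ∈ Finset.range j, A k) * B j +
      (∏ k ∈ Finset.range 0, A k) * M 0 : ℝ) : EReal) = ((M 0 : ℝ) : EReal) := by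
    norm_num
  rw [h0, perpCycleSup, ereal_mul_coe_iSup hA, ereal_add_coe_max]
  have hM : (B 0 : EReal) + ((M 0 - B 0 : ℝ) : EReal) = ((M 0 : ℝ) : EReal) := by
    rw [← EReal.coe_add]; norm_num
  rw [hM, ereal_add_coe_iSup]
  congr 1
  apply iSup_congr
  intro i
  rw [← EReal.coe_mul, ← EReal.coe_add, perp_term_succ A B M i]

lemma measurable_coe_add_ereal : Measurable (fun p : ℝ × EReal => (p.1 : EReal) + p.2) := by
  have hc : Continuous (fun p : ℝ × EReal => (p.1 : EReal) + p.2) := by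
    rw [continuous_iff_continuousAt]
    intro p
    have h1 : ContinuousAt (fun q : EReal × EReal => q.1 + q.2) ((p.1 : EReal), p.2) :=
      EReal.continuousAt_add (Or.inl (EReal.coe_ne_top _)) (Or.inl (EReal.coe_ne_bot _))
    show ContinuousAt ((fun q : EReal × EReal => q.1 + q.2) ∘
      (fun p : ℝ × EReal => ((p.1 : EReal), p.2))) p
    exact ContinuousAt.comp h1 (((continuous_coe_real_ereal.comp continuous_fst).prodMk
      continuous_snd).continuousAt)
  exact hc.measurable

lemma measurable_coe_mul_ereal : Measurable (fun p : ℝ × EReal => (p.1 : EReal) * p.2) := by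
  have h : (fun p : ℝ × EReal => (p.1 : EReal) * p.2) = fun p =>
      if p.2 = ⊤ then (if 0 < p.1 then (⊤ : EReal) else if p.1 < 0 then ⊥ else 0)
      else if p.2 = ⊥ then (if 0 < p.1 then (⊥ : EReal) else if p.1 < 0 then ⊤ else 0)
      else ((p.1 * p.2.toReal : ℝ) : EReal) := by
    funext p
    obtain ⟨a, w⟩ := p
    induction w with
    | bot =>
      rcases lt_trichotomy a 0 with h | h | h
      · simp [EReal.coe_mul_bot_of_neg h, h, not_lt.2 h.le, h.ne]
      · simp [h]
      · simp [EReal.coe_mul_bot_of_pos h, h]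
    | coe x =>
      simp [EReal.coe_mul]
    | top =>
      rcases lt_trichotomy a 0 with h | h | h
      · simp [EReal.coe_mul_top_of_neg h, h, not_lt.2 h.le]
      · simp [h]
      · simp [EReal.coe_mul_top_of_pos h, h]
  rw [h]
  have hs1 : MeasurableSet {p : ℝ × EReal | p.2 = ⊤} :=
    measurable_snd (measurableSet_singleton ⊤)
  have hs2 : MeasurableSet {p : ℝ × EReal | p.2 = ⊥} :=
    measurable_snd (measurableSet_singleton ⊥)
  have hp : MeasurableSet {p : ℝ × EReal | 0 < p.1} :=
    measurableSet_lt measurable_const measurable_fst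
  have hn : MeasurableSet {p : ℝ × EReal | p.1 < 0} :=
    measurableSet_lt measurable_fst measurable_const
  refine Measurable.ite hs1 ?_ (Measurable.ite hs2 ?_ ?_)
  · exact Measurable.ite hp measurable_const (Measurable.ite hn measurable_const measurable_const)
  · exact Measurable.ite hp measurable_const (Measurable.ite hn measurable_const measurable_const)
  · exact (measurable_fst.mul measurable_snd.ereal_toReal).coe_real_ereal

lemma measurable_Phi : Measurable (fun x : ℕ → ℝ × ℝ × ℝ =>
    perpCycleSup (fun i => (x i).1) (fun i => (x i).2.1) (fun i => (x i).2.2)) := by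
  unfold perpCycleSup
  refine Measurable.iSup (ι := ℕ) fun i => Measurable.coe_real_ereal ?_
  apply Measurable.add
  · apply Finset.measurable_sum
    intro j _
    exact (Finset.measurable_prod _ fun k _ => (measurable_pi_apply k).fst).mul
      (measurable_pi_apply j).snd.fst
  · exact (Finset.measurable_prod _ fun k _ => (measurable_pi_apply k).fst).mul
      (measurable_pi_apply i).snd.snd

lemma measurable_Psi : Measurable (fun p : (ℝ × ℝ × ℝ) × EReal =>
    (p.1.2.1 : EReal) + max ((p.1.2.2 - p.1.2.1 : ℝ) : EReal) ((p.1.1 : EReal) * p.2)) := by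
  have h1 : Measurable fun p : (ℝ × ℝ × ℝ) × EReal => (p.1.1 : EReal) * p.2 :=
    measurable_coe_mul_ereal.comp (measurable_fst.fst.prodMk measurable_snd)
  have h2 : Measurable fun p : (ℝ × ℝ × ℝ) × EReal =>
      max ((p.1.2.2 - p.1.2.1 : ℝ) : EReal) ((p.1.1 : EReal) * p.2) :=
    Measurable.max ((measurable_fst.snd.snd.sub measurable_fst.snd.fst).coe_real_ereal) h1
  exact measurable_coe_add_ereal.comp (measurable_fst.snd.fst.prodMk h2)

lemma iIndepFun_precomp {Ω : Type*} [MeasurableSpace Ω] {μ : Measure Ω}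
    {E : Type*} [MeasurableSpace E] {ι ι' : Type*} {X : ι → Ω → E}
    (g : ι' → ι) (hg : Function.Injective g)
    (h : iIndepFun X μ) :
    iIndepFun (fun i => X (g i)) μ := by
  classical
  rw [iIndepFun_iff_measure_inter_preimage_eq_mul] at h ⊢
  intro S sets hsets
  set sets' : ι → Set E := fun j =>
    if hj : ∃ i ∈ S, g i = j then sets hj.choose else Set.univ with hsets'def
  have hkey : ∀ i ∈ S, sets' (g i) = sets i := by
    intro i hi
    have hex : ∃ i' ∈ S, g i' = g i := ⟨i, hi, rfl⟩
    have : hex.choose = i := hg hex.choose_spec.2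
    simp only [hsets'def, dif_pos hex, this]
  have hmeas' : ∀ j, j ∈ S.image g → MeasurableSet (sets' j) := by
    intro j hj
    simp only [hsets'def]
    split
    · next hj' => exact hsets _ hj'.choose_spec.1
    · exact MeasurableSet.univ
  have hinter : (⋂ j ∈ S.image g, X j ⁻¹' sets' j) = ⋂ i ∈ S, (fun ω => X (g i) ω) ⁻¹' sets i := by
    ext ω
    simp only [Set.mem_iInter, Finset.mem_image, Set.mem_preimage]
    constructor
    · intro hh i hi
      have := hh (g i) ⟨i, hi, rfl⟩
      rwa [hkey i hi] at this
    · rintro hh j ⟨i, hi, rfl⟩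
      rw [hkey i hi]
      exact hh i hi
  calc μ (⋂ i ∈ S, (fun ω => X (g i) ω) ⁻¹' sets i)
      = μ (⋂ j ∈ S.image g, X j ⁻¹' sets' j) := by rw [hinter]
    _ = ∏ j ∈ S.image g, μ (X j ⁻¹' sets' j) := h (S.image g) hmeas'
    _ = ∏ i ∈ S, μ (X (g i) ⁻¹' sets' (g i)) :=
        Finset.prod_image (fun x _ y _ hxy => hg hxy)
    _ = ∏ i ∈ S, μ ((fun ω => X (g i) ω) ⁻¹' sets i) :=
        Finset.prod_congr rfl fun i hi => by rw [hkey i hi]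

lemma map_fun_eq_pi {Ω : Type*} [MeasurableSpace Ω] (μ : Measure Ω) [IsProbabilityMeasure μ]
    {E : Type*} [MeasurableSpace E] {ι : Type*} [Fintype ι]
    (Y : ι → Ω → E) (hm : ∀ i, Measurable (Y i))
    (hind : iIndepFun Y μ) :
    μ.map (fun ω => fun i => Y i ω) = Measure.pi (fun i => μ.map (Y i)) := by
  haveI : ∀ i, IsProbabilityMeasure (μ.map (Y i)) :=
    fun i => Measure.isProbabilityMeasure_map (hm i).aemeasurable
  refine (Measure.pi_eq fun s hs => ?_).symm
  rw [Measure.map_apply (measurable_pi_lambda _ fun i => hm i) (MeasurableSet.univ_pi hs)]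
  have hpre : (fun ω => fun i => Y i ω) ⁻¹' Set.pi Set.univ s = ⋂ i ∈ Finset.univ, Y i ⁻¹' s i := by
    ext ω; simp [Set.mem_pi]
  rw [hpre, hind.measure_inter_preimage_eq_mul Finset.univ (fun i _ => hs i)]
  exact Finset.prod_congr rfl fun i _ => (Measure.map_apply (hm i) (hs i)).symm

lemma seq_shift_law {Ω : Type*} [MeasurableSpace Ω] (μ : Measure Ω) [IsProbabilityMeasure μ]
    {E : Type*} [MeasurableSpace E] (X : ℕ → Ω → E) (hXm : ∀ i, Measurable (X i))
    (hiid : iIndepFun X μ)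
    (hid : ∀ i, IdentDistrib (X i) (X 0) μ μ) :
    μ.map (fun ω => fun i => X (i+1) ω) = μ.map (fun ω => fun i => X i ω) := by
  have hm1 : Measurable (fun ω => fun i : ℕ => X (i+1) ω) := measurable_pi_lambda _ fun i => hXm _
  have hm0 : Measurable (fun ω => fun i : ℕ => X i ω) := measurable_pi_lambda _ fun i => hXm _
  haveI h1p : IsProbabilityMeasure (μ.map (fun ω => fun i : ℕ => X (i+1) ω)) :=
    Measure.isProbabilityMeasure_map hm1.aemeasurable
  haveI h0p : IsProbabilityMeasure (μ.map (fun ω => fun i : ℕ => X i ω)) :=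
    Measure.isProbabilityMeasure_map hm0.aemeasurable
  refine ext_of_generate_finite _ generateFrom_measurableCylinders.symm
    isPiSystem_measurableCylinders ?_ (by simp)
  intro t ht
  obtain ⟨s, S, hS, rfl⟩ := (MeasureTheory.mem_measurableCylinders _).1 ht
  rw [Measure.map_apply hm1 (hS.cylinder s), Measure.map_apply hm0 (hS.cylinder s)]
  have h1 : (fun ω => fun i : ℕ => X (i+1) ω) ⁻¹' cylinder s S
      = (fun ω => fun i : s => X ((i : ℕ)+1) ω) ⁻¹' S := rfl
  have h2 : (fun ω => fun i : ℕ => X i ω) ⁻¹' cylinder s S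
      = (fun ω => fun i : s => X (i : ℕ) ω) ⁻¹' S := rfl
  have hg1 : Function.Injective (fun i : s => (i : ℕ) + 1) := by
    intro a b hab
    exact Subtype.ext (by simpa using hab)
  have hg0 : Function.Injective (fun i : s => (i : ℕ)) := fun a b hab => Subtype.ext hab
  rw [h1, h2,
    ← Measure.map_apply (measurable_pi_lambda _ fun i : s => hXm _) hS,
    ← Measure.map_apply (measurable_pi_lambda _ fun i : s => hXm _) hS,
    map_fun_eq_pi μ (fun i : s => X ((i : ℕ)+1)) (fun i => hXm _)
      (iIndepFun_precomp (fun i : s => (i : ℕ) + 1) hg1 hiid),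
    map_fun_eq_pi μ (fun i : s => X (i : ℕ)) (fun i => hXm _)
      (iIndepFun_precomp (fun i : s => (i : ℕ)) hg0 hiid)]
  have hmarg : (fun i : s => Measure.map (X ((i : ℕ)+1)) μ)
      = fun i : s => Measure.map (X (i : ℕ)) μ :=
    funext fun i => (hid _).map_eq.trans (hid _).map_eq.symm
  rw [hmarg]

theorem perpetuity_distributional_fixed_point {Ω : Type*} [MeasurableSpace Ω]
    (μ : Measure Ω) [IsProbabilityMeasure μ]
    (A B M : ℕ → Ω → ℝ)
    (hAmeas : ∀ i, Measurable (A i)) (hBmeas : ∀ i, Measurable (B i))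
    (hMmeas : ∀ i, Measurable (M i))
    (hApos : ∀ i ω, 0 < A i ω)
    (hiid : iIndepFun
      (fun i => fun ω => (A (i + 1) ω, B (i + 1) ω, M (i + 1) ω)) μ)
    (hident : ∀ i : ℕ, 1 ≤ i → IdentDistrib
      (fun ω => (A i ω, B i ω, M i ω)) (fun ω => (A 1 ω, B 1 ω, M 1 ω)) μ μ)
    (hindep0 : IndepFun (fun ω => (A 0 ω, B 0 ω, M 0 ω))
      (fun ω => fun i : ℕ => (A (i + 1) ω, B (i + 1) ω, M (i + 1) ω)) μ) :
    (IdentDistrib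
        (fun ω => perpCycleSup (fun i => A i ω) (fun i => B i ω) (fun i => M i ω))
        (fun ω => (B 0 ω : EReal) + max ((M 0 ω - B 0 ω : ℝ) : EReal)
          ((A 0 ω : EReal) * perpCycleSup (fun i => A (i + 1) ω)
            (fun i => B (i + 1) ω) (fun i => M (i + 1) ω))) μ μ
      ∧ IndepFun (fun ω => (A 0 ω, B 0 ω, M 0 ω))
          (fun ω => perpCycleSup (fun i => A (i + 1) ω)
            (fun i => B (i + 1) ω) (fun i => M (i + 1) ω)) μ)
    ∧ ∀ (Ω' : Type) (_ : MeasurableSpace Ω') (ν : Measure Ω'),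
        IsProbabilityMeasure ν →
      ∀ (A' B' M' : Ω' → ℝ) (W' : Ω' → EReal),
        IdentDistrib (fun ω' => (A' ω', B' ω', M' ω'))
          (fun ω => (A 1 ω, B 1 ω, M 1 ω)) ν μ →
        IdentDistrib W' (fun ω => perpCycleSup (fun i => A (i + 1) ω)
          (fun i => B (i + 1) ω) (fun i => M (i + 1) ω)) ν μ →
        IndepFun (fun ω' => (A' ω', B' ω', M' ω')) W' ν →
        IdentDistrib
          (fun ω' => (B' ω' : EReal) + max ((M' ω' - B' ω' : ℝ) : EReal)
            ((A' ω' : EReal) * W' ω'))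
          (fun ω => perpCycleSup (fun i => A (i + 1) ω)
            (fun i => B (i + 1) ω) (fun i => M (i + 1) ω)) ν μ := by
  classical
  set X : ℕ → Ω → ℝ × ℝ × ℝ := fun i ω => (A (i + 1) ω, B (i + 1) ω, M (i + 1) ω) with hXdef
  have hXm : ∀ i, Measurable (X i) :=
    fun i => (hAmeas _).prodMk ((hBmeas _).prodMk (hMmeas _))
  set Phi : (ℕ → ℝ × ℝ × ℝ) → EReal := fun x =>
    perpCycleSup (fun i => (x i).1) (fun i => (x i).2.1) (fun i => (x i).2.2) with hPhidef
  have hPhi : Measurable Phi := measurable_Phi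
  -- W1 = shifted sup
  set W1 : Ω → EReal := fun ω => perpCycleSup (fun i => A (i + 1) ω)
    (fun i => B (i + 1) ω) (fun i => M (i + 1) ω) with hW1def
  have hW1Phi : W1 = fun ω => Phi (fun i => X i ω) := rfl
  have hW1m : Measurable W1 := by
    rw [hW1Phi]
    exact hPhi.comp (measurable_pi_lambda _ hXm)
  set W2 : Ω → EReal := fun ω => Phi (fun i => X (i + 1) ω) with hW2def
  have hW2m : Measurable W2 := hPhi.comp (measurable_pi_lambda _ fun i => hXm _)
  have h0m : Measurable (fun ω => (A 0 ω, B 0 ω, M 0 ω)) :=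
    (hAmeas 0).prodMk ((hBmeas 0).prodMk (hMmeas 0))
  refine ⟨⟨?_, ?_⟩, ?_⟩
  · -- part 1a : pathwise equality
    have heq : (fun ω => perpCycleSup (fun i => A i ω) (fun i => B i ω) (fun i => M i ω))
        = fun ω => (B 0 ω : EReal) + max ((M 0 ω - B 0 ω : ℝ) : EReal) ((A 0 ω : EReal) * W1 ω) :=
      funext fun ω => perpCycleSup_rec (fun i => A i ω) (fun i => B i ω) (fun i => M i ω)
        (hApos 0 ω)
    rw [heq]
    have hm : Measurable (fun ω => (B 0 ω : EReal) + max ((M 0 ω - B 0 ω : ℝ) : EReal)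
        ((A 0 ω : EReal) * W1 ω)) :=
      measurable_Psi.comp (h0m.prodMk hW1m)
    exact IdentDistrib.refl hm.aemeasurable
  · -- part 1b
    exact hindep0.comp measurable_id hPhi
  · -- part 2
    intro Ω' mΩ' ν hν A' B' M' W' hid' hW' hindep'
    haveI := hν
    -- recursion for W1
    have hrec : W1 = fun ω => ((X 0 ω).2.1 : EReal) +
        max (((X 0 ω).2.2 - (X 0 ω).2.1 : ℝ) : EReal) (((X 0 ω).1 : EReal) * W2 ω) :=
      funext fun ω => perpCycleSup_rec (fun i => A (i + 1) ω) (fun i => B (i + 1) ω)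
        (fun i => M (i + 1) ω) (hApos 1 ω)
    -- identical distribution of W2 and W1
    have hidX : ∀ i, IdentDistrib (X i) (X 0) μ μ := fun i => hident (i + 1) (by omega)
    have hseq : μ.map (fun ω => fun i => X (i + 1) ω) = μ.map (fun ω => fun i => X i ω) :=
      seq_shift_law μ X hXm hiid hidX
    have hseqid : IdentDistrib (fun ω => fun i => X (i + 1) ω) (fun ω => fun i => X i ω) μ μ :=
      ⟨(measurable_pi_lambda _ fun i => hXm _).aemeasurable,
        (measurable_pi_lambda _ fun i => hXm _).aemeasurable, hseq⟩
    have hW2id : IdentDistrib W2 W1 μ μ := hseqid.comp hPhi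
    -- independence of X 0 and W2
    have hW2indep : IndepFun (X 0) W2 μ := by
      rw [IndepFun_iff_Indep]
      have hii : iIndep (fun i => MeasurableSpace.comap (X i) inferInstance) μ :=
        (iIndepFun_iff_iIndep _ _ _).1 hiid
      have hI := indep_iSup_of_disjoint (fun i => (hXm i).comap_le) hii
        (S := {0}) (T := {i : ℕ | 1 ≤ i})
        (by rw [Set.disjoint_left]; rintro x rfl; simp)
      refine indep_of_indep_of_le_right (indep_of_indep_of_le_left hI ?_) ?_
      · exact le_iSup₂ (f := fun i (_ : i ∈ ({0} : Set ℕ)) =>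
          MeasurableSpace.comap (X i) inferInstance) 0 rfl
      · set m' : MeasurableSpace Ω := ⨆ j ∈ {i : ℕ | 1 ≤ i},
          MeasurableSpace.comap (X j) inferInstance with hm'def
        have hXi : ∀ i : ℕ, Measurable[m'] (X (i + 1)) := fun i =>
          Measurable.of_comap_le (le_iSup₂ (f := fun j (_ : j ∈ {i : ℕ | 1 ≤ i}) =>
            MeasurableSpace.comap (X j) inferInstance) (i + 1) (by simp))
        have hseqm : Measurable[m'] (fun ω => fun i => X (i + 1) ω) :=
          measurable_pi_lambda _ hXi
        have hW2m' : Measurable[m'] W2 := hPhi.comp hseqm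
        exact hW2m'.comap_le
    -- joint law equality
    have hAE1 : AEMeasurable (fun ω' => (A' ω', B' ω', M' ω')) ν := hid'.aemeasurable_fst
    have hAEW' : AEMeasurable W' ν := hW'.aemeasurable_fst
    have hmap1 : ν.map (fun ω' => (A' ω', B' ω', M' ω')) = μ.map (X 0) := hid'.map_eq
    have hmapW : ν.map W' = μ.map W2 := hW'.map_eq.trans hW2id.map_eq.symm
    have hpair : IdentDistrib (fun ω' => ((A' ω', B' ω', M' ω'), W' ω'))
        (fun ω => (X 0 ω, W2 ω)) ν μ := by
      refine ⟨hAE1.prodMk hAEW', ((hXm 0).prodMk hW2m).aemeasurable, ?_⟩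
      rw [(indepFun_iff_map_prod_eq_prod_map_map hAE1 hAEW').1 hindep',
        (indepFun_iff_map_prod_eq_prod_map_map (hXm 0).aemeasurable hW2m.aemeasurable).1
          hW2indep, hmap1, hmapW]
    have := hpair.comp measurable_Psi
    rw [hrec]
    exact this
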